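/- Let J be a finite set. For each j ∈ J let λ_j ≥ 0 and s_j ≥ 0 be reals, let k_j and d_j be positive integers with 1 ≤ k_j ≤ d_j, let b be a real with 0 < b ≤ 1, and let π_{j,m} ≥ 0 for m = 1, …, d_j be reals satisfying ∑_{m=1}^{d_j} π_{j,m} · m = b · d_j. Then ∑_{j ∈ J} λ_j s_j ≤ ∑_{j ∈ J} ∑_{m=1}^{d_j} (λ_j π_{j,m} / b) · (min(k_j, m) / k_j) · s_j. -/

import Mathlib

/-- Lemma 5.4 (lem-B-load): arriving workload "prefers" servers with finite
workloads.  If `π j m` (for `1 ≤ m ≤ d j`) are nonnegative weights with mean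
`∑ m, π j m * m = b * d j`, then the load `ρ = ∑ j, λ j * s j` of the full system
is at most the load `ρ_B = ∑ j, ∑ m, (λ j * π j m / b) * (min (k j) m / k j) * s j`
of the `B`-subsystem. -/
theorem B_subsystem_load_ge
    (J : Type*) [Fintype J]
    (lam s : J → ℝ) (hlam : ∀ j, 0 ≤ lam j) (hs : ∀ j, 0 ≤ s j)
    (k d : J → ℕ) (hk : ∀ j, 1 ≤ k j) (hkd : ∀ j, k j ≤ d j)
    (b : ℝ) (hb0 : 0 < b) (hb1 : b ≤ 1)
    (π : J → ℕ → ℝ) (hπ : ∀ j, ∀ m ∈ Finset.Icc 1 (d j), 0 ≤ π j m)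
    (hmean : ∀ j, ∑ m ∈ Finset.Icc 1 (d j), π j m * (m : ℝ) = b * (d j : ℝ)) :
    ∑ j, lam j * s j ≤
      ∑ j, ∑ m ∈ Finset.Icc 1 (d j),
        (lam j * π j m / b) * ((min (k j) m : ℝ) / (k j : ℝ)) * s j := by
  apply Finset.sum_le_sum
  intro j _
  have hk0 : (0:ℝ) < (k j : ℝ) := by exact_mod_cast Nat.lt_of_lt_of_le Nat.zero_lt_one (hk j)
  have hd0 : (0:ℝ) < (d j : ℝ) := by
    exact_mod_cast Nat.lt_of_lt_of_le Nat.zero_lt_one (le_trans (hk j) (hkd j))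
  have key : b * (k j : ℝ) ≤ ∑ m ∈ Finset.Icc 1 (d j), π j m * (min (k j) m : ℝ) := by
    have h1 : ∑ m ∈ Finset.Icc 1 (d j), π j m * ((k j : ℝ) * m / (d j : ℝ)) ≤
        ∑ m ∈ Finset.Icc 1 (d j), π j m * (min (k j) m : ℝ) := by
      apply Finset.sum_le_sum
      intro m hm
      apply mul_le_mul_of_nonneg_left _ (hπ j m hm)
      have hmd : (m : ℝ) ≤ (d j : ℝ) := by
        exact_mod_cast (Finset.mem_Icc.mp hm).2
      have hkd' : (k j : ℝ) ≤ (d j : ℝ) := by exact_mod_cast hkd j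
      rcases le_total (k j) m with h | h
      · have : (min (k j) m : ℝ) = (k j : ℝ) :=
          min_eq_left (by exact_mod_cast h)
        rw [this, div_le_iff₀ hd0]
        nlinarith
      · have hmk : (m : ℝ) ≤ (k j : ℝ) := by exact_mod_cast h
        have : (min (k j) m : ℝ) = (m : ℝ) :=
          min_eq_right (by exact_mod_cast h)
        rw [this, div_le_iff₀ hd0]
        have hm0 : (0:ℝ) ≤ (m : ℝ) := Nat.cast_nonneg m
        nlinarith
    have h2 : ∑ m ∈ Finset.Icc 1 (d j), π j m * ((k j : ℝ) * m / (d j : ℝ)) =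
        ((k j : ℝ) / (d j : ℝ)) * ∑ m ∈ Finset.Icc 1 (d j), π j m * (m : ℝ) := by
      rw [Finset.mul_sum]
      apply Finset.sum_congr rfl
      intros; ring
    rw [h2, hmean j] at h1
    calc b * (k j : ℝ) = (k j : ℝ) / (d j : ℝ) * (b * (d j : ℝ)) := by
          field_simp
      _ ≤ _ := h1
  have hcoef : 0 ≤ lam j * s j / (b * (k j : ℝ)) :=
    div_nonneg (mul_nonneg (hlam j) (hs j)) (le_of_lt (mul_pos hb0 hk0))
  have hrw : ∑ m ∈ Finset.Icc 1 (d j),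
      (lam j * π j m / b) * ((min (k j) m : ℝ) / (k j : ℝ)) * s j =
      (lam j * s j / (b * (k j : ℝ))) * ∑ m ∈ Finset.Icc 1 (d j), π j m * (min (k j) m : ℝ) := by
    rw [Finset.mul_sum]
    apply Finset.sum_congr rfl
    intros; ring
  rw [hrw]
  calc lam j * s j = (lam j * s j / (b * (k j : ℝ))) * (b * (k j : ℝ)) := by
        field_simp
    _ ≤ _ := mul_le_mul_of_nonneg_left key hcoef
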